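/- Let C ⊆ ℝ be a closed set that is linearly independent over ℚ, and let P ⊆ C be a coanalytic set (i.e., ℝ \ P is analytic). Then the additive subgroup of (ℝ, +) generated by P is coanalytic, i.e., its complement in ℝ is analytic. -/

import Mathlib

open MeasureTheory Set
noncomputable section Aux

/-- The sum map `(c, n) ↦ ∑ i, n i * c i`. -/
def auxFsum (k : ℕ) (p : (Fin k → ℝ) × (Fin k → ℤ)) : ℝ := ∑ i, (p.2 i : ℝ) * p.1 i

lemma auxFsum_continuous (k : ℕ) : Continuous (auxFsum k) := by
  apply continuous_finset_sum
  intro i _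
  exact (continuous_of_discreteTopology.comp ((continuous_apply i).comp continuous_snd)).mul
    ((continuous_apply i).comp continuous_fst)

/-- Canonical representations. -/
def auxGood (C : Set ℝ) (k : ℕ) : Set ((Fin k → ℝ) × (Fin k → ℤ)) :=
  {p | (∀ i, p.1 i ∈ C) ∧ StrictMono p.1 ∧ ∀ i, p.2 i ≠ 0}

lemma auxGood_measurable (C : Set ℝ) (hC : IsClosed C) (k : ℕ) :
    MeasurableSet (auxGood C k) := by
  have h1 : MeasurableSet {p : (Fin k → ℝ) × (Fin k → ℤ) | ∀ i, p.1 i ∈ C} := by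
    rw [show {p : (Fin k → ℝ) × (Fin k → ℤ) | ∀ i, p.1 i ∈ C}
        = ⋂ i, (fun p : (Fin k → ℝ) × (Fin k → ℤ) => p.1 i) ⁻¹' C by ext p; simp]
    exact MeasurableSet.iInter fun i =>
      (measurable_fst.eval) hC.measurableSet
  have h2 : MeasurableSet {p : (Fin k → ℝ) × (Fin k → ℤ) | StrictMono p.1} := by
    rw [show {p : (Fin k → ℝ) × (Fin k → ℤ) | StrictMono p.1}
        = ⋂ (i) (j) (_ : i < j), {p : (Fin k → ℝ) × (Fin k → ℤ) | p.1 i < p.1 j} by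
      ext p; simp [StrictMono]]
    refine MeasurableSet.iInter fun i => MeasurableSet.iInter fun j =>
      MeasurableSet.iInter fun _ => ?_
    exact measurableSet_lt (measurable_fst.eval)
      (measurable_fst.eval)
  have h3 : MeasurableSet {p : (Fin k → ℝ) × (Fin k → ℤ) | ∀ i, p.2 i ≠ 0} := by
    rw [show {p : (Fin k → ℝ) × (Fin k → ℤ) | ∀ i, p.2 i ≠ 0}
        = ⋂ i, (fun p : (Fin k → ℝ) × (Fin k → ℤ) => p.2 i) ⁻¹' ({0}ᶜ) by ext p; simp]
    exact MeasurableSet.iInter fun i =>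
      (measurable_snd.eval) (measurableSet_singleton 0).compl
  exact (h1.inter (h2.inter h3))

end Aux
noncomputable section Aux2

/-- Existence of canonical representations. -/
lemma auxExists {S : Set ℝ} {x : ℝ} (hx : x ∈ AddSubgroup.closure S) :
    ∃ (k : ℕ) (c : Fin k → ℝ) (n : Fin k → ℤ), (∀ i, c i ∈ S) ∧ StrictMono c ∧
      (∀ i, n i ≠ 0) ∧ ∑ i, (n i : ℝ) * c i = x := by
  rw [← Submodule.span_int_eq_addSubgroupClosure, Submodule.mem_toAddSubgroup,
    Submodule.mem_span_set] at hx
  obtain ⟨f, hsupp, hsum⟩ := hx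
  set k := f.support.card with hk
  set e := f.support.orderIsoOfFin rfl with he
  refine ⟨k, fun i => (e i : ℝ), fun i => f (e i), fun i => hsupp (e i).2, ?_, ?_, ?_⟩
  · intro a b hab
    exact Subtype.coe_lt_coe.2 (e.strictMono hab)
  · intro i
    exact Finsupp.mem_support_iff.1 (e i).2
  · rw [← hsum, Finsupp.sum,
      ← Finset.sum_coe_sort f.support (fun a => f a • (a : ℝ)),
      ← Equiv.sum_comp e.toEquiv (fun a : f.support => f (a : ℝ) • (a : ℝ))]
    simp [zsmul_eq_mul]
    rfl

lemma auxEval {k : ℕ} (c : Fin k → ℝ) (q : Fin k → ℚ) (x : ℝ) :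
    ((∑ i, Finsupp.single (c i) (q i)) : ℝ →₀ ℚ) x = ∑ i, if c i = x then q i else 0 := by
  rw [Finsupp.finset_sum_apply]
  simp [Finsupp.single_apply]

/-- Key uniqueness lemma from linear independence. -/
lemma auxKey {C : Set ℝ} (hind : LinearIndependent ℚ ((↑) : C → ℝ))
    {k l : ℕ} {c : Fin k → ℝ} {n : Fin k → ℤ} {d : Fin l → ℝ} {m : Fin l → ℤ}
    (hc : ∀ i, c i ∈ C) (hcinj : Function.Injective c)
    (hd : ∀ j, d j ∈ C) (hdinj : Function.Injective d)
    (hsum : ∑ i, (n i : ℝ) * c i = ∑ j, (m j : ℝ) * d j) :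
    ∀ i, n i ≠ 0 → ∃ j, d j = c i ∧ m j = n i := by
  set F : ℝ →₀ ℚ := (∑ i, Finsupp.single (c i) ((n i : ℚ)))
    - ∑ j, Finsupp.single (d j) ((m j : ℚ)) with hF
  have hFapp : ∀ x, F x = (∑ i, if c i = x then (n i : ℚ) else 0)
      - ∑ j, if d j = x then (m j : ℚ) else 0 := by
    intro x
    rw [hF, Finsupp.sub_apply, auxEval, auxEval]
  have hFsupp : F ∈ Finsupp.supported ℚ ℚ C := by
    rw [Finsupp.mem_supported]
    intro x hx
    have hx' : F x ≠ 0 := Finsupp.mem_support_iff.1 hx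
    rw [hFapp] at hx'
    by_contra hxC
    have h1 : ∀ i, c i ≠ x := fun i h => hxC (h ▸ hc i)
    have h2 : ∀ j, d j ≠ x := fun j h => hxC (h ▸ hd j)
    simp [h1, h2] at hx' 
  have htot : Finsupp.linearCombination ℚ id F = 0 := by
    rw [hF, map_sub, map_sum, map_sum]
    simp only [Finsupp.linearCombination_single, id_eq, Rat.smul_def, Rat.cast_intCast]
    rw [hsum]
    ring
  have hF0 : F = 0 := linearIndepOn_iff.1 (linearIndependent_subtype_iff.1 hind) F hFsupp htot
  intro i hi
  have hFc : F (c i) = 0 := by rw [hF0]; rfl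
  rw [hFapp] at hFc
  have hleft : (∑ i', if c i' = c i then ((n i' : ℚ)) else 0) = (n i : ℚ) := by
    simp [hcinj.eq_iff]
  rw [hleft, sub_eq_zero] at hFc
  have hex : ∃ j, d j = c i := by
    by_contra hne
    push_neg at hne
    simp [hne] at hFc
    exact hi (by exact_mod_cast hFc)
  obtain ⟨j, hj⟩ := hex
  refine ⟨j, hj, ?_⟩
  have : (∑ j', if d j' = c i then ((m j' : ℚ)) else 0) = (m j : ℚ) := by
    simp [← hj, hdinj.eq_iff]
  rw [this] at hFc
  exact_mod_cast hFc.symm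

end Aux2

noncomputable section Main

lemma auxAnalytic_union {s t : Set ℝ} (hs : AnalyticSet s) (ht : AnalyticSet t) :
    AnalyticSet (s ∪ t) := by
  rw [Set.union_eq_iUnion]
  exact AnalyticSet.iUnion (fun b => by cases b <;> simpa)

lemma auxAnalytic_inter {α : Type*} [TopologicalSpace α] [T2Space α] {s t : Set α}
    (hs : AnalyticSet s) (ht : AnalyticSet t) : AnalyticSet (s ∩ t) := by
  rw [Set.inter_eq_iInter]
  exact AnalyticSet.iInter (fun b => by cases b <;> simpa)

lemma auxInjOn {C : Set ℝ} (hind : LinearIndependent ℚ ((↑) : C → ℝ)) (k : ℕ) :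
    Set.InjOn (auxFsum k) (auxGood C k) := by
  rintro ⟨c, n⟩ ⟨hc, hcmono, hn⟩ ⟨d, m⟩ ⟨hd, hdmono, hm⟩ hsum
  have key1 := auxKey hind hc hcmono.injective hd hdmono.injective hsum
  have key2 := auxKey hind hd hdmono.injective hc hcmono.injective hsum.symm
  have hrange : Set.range c = Set.range d := by
    apply Set.Subset.antisymm
    · rintro x ⟨i, rfl⟩
      obtain ⟨j, hj, -⟩ := key1 i (hn i)
      exact ⟨j, hj⟩
    · rintro x ⟨j, rfl⟩
      obtain ⟨i, hi, -⟩ := key2 j (hm j)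
      exact ⟨i, hi⟩
  haveI : WellFoundedLT (Fin k) := Finite.to_wellFoundedLT
  have hcd : c = d := (StrictMono.range_inj hcmono hdmono).1 hrange
  subst hcd
  have hnm : n = m := by
    funext i
    obtain ⟨j, hj, hj2⟩ := key1 i (hn i)
    rw [hcmono.injective hj] at hj2
    exact hj2.symm
  rw [hnm]

lemma auxClosure_eq (C : Set ℝ) :
    ((AddSubgroup.closure C : AddSubgroup ℝ) : Set ℝ) = ⋃ k, auxFsum k '' auxGood C k := by
  ext x
  constructor
  · intro hx
    obtain ⟨k, c, n, hc, hmono, hn, hsum⟩ := auxExists hx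
    exact Set.mem_iUnion.2 ⟨k, ⟨(c, n), ⟨hc, hmono, hn⟩, hsum⟩⟩
  · intro hx
    obtain ⟨k, ⟨c, n⟩, ⟨hc, -, -⟩, rfl⟩ := Set.mem_iUnion.1 hx
    exact sum_mem fun i _ => by
      simpa [zsmul_eq_mul] using
        zsmul_mem (AddSubgroup.subset_closure (hc i)) (n i)

end Main

/-- If `C ⊆ ℝ` is closed and linearly independent over `ℚ` and `P ⊆ C` is
coanalytic, then the additive subgroup of `ℝ` generated by `P` is coanalytic. -/
theorem analyticSet_compl_addSubgroup_closure_of_coanalytic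
    (C : Set ℝ) (hC : IsClosed C)
    (hind : LinearIndependent ℚ ((↑) : C → ℝ))
    (P : Set ℝ) (hPC : P ⊆ C) (hP : AnalyticSet Pᶜ) :
    AnalyticSet (((AddSubgroup.closure P : AddSubgroup ℝ) : Set ℝ)ᶜ) := by
  -- bad set: representations using an element outside `P`
  set B : ∀ k : ℕ, Set ((Fin k → ℝ) × (Fin k → ℤ)) :=
    fun k => {p | ∃ i, p.1 i ∈ Pᶜ} with hB
  have hmain : (((AddSubgroup.closure P : AddSubgroup ℝ) : Set ℝ))ᶜ
      = (((AddSubgroup.closure C : AddSubgroup ℝ) : Set ℝ))ᶜ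
        ∪ ⋃ k, auxFsum k '' (auxGood C k ∩ B k) := by
    ext x
    simp only [Set.mem_compl_iff, Set.mem_union, Set.mem_iUnion]
    constructor
    · intro hx
      by_cases hxC : x ∈ (AddSubgroup.closure C : AddSubgroup ℝ)
      · right
        obtain ⟨k, c, n, hc, hmono, hn, hsum⟩ := auxExists hxC
        by_cases hall : ∀ i, c i ∈ P
        · exfalso
          exact hx (by
            rw [← hsum]
            exact sum_mem fun i _ => by
              simpa [zsmul_eq_mul] using
                zsmul_mem (AddSubgroup.subset_closure (hall i)) (n i))
        · push_neg at hall
          obtain ⟨i0, hi0⟩ := hall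
          exact ⟨k, (c, n), ⟨⟨hc, hmono, hn⟩, ⟨i0, hi0⟩⟩, hsum⟩
      · exact Or.inl hxC
    · rintro (hx | ⟨k, ⟨c, n⟩, ⟨⟨hc, hmono, hn⟩, ⟨i0, hi0⟩⟩, hsum⟩)
      · intro hxP
        exact hx (AddSubgroup.closure_mono hPC hxP)
      · intro hxP
        obtain ⟨l, d, m, hd, hdmono, hm, hsum'⟩ := auxExists hxP
        have key := auxKey hind hc hmono.injective (fun j => hPC (hd j))
          hdmono.injective (hsum.trans hsum'.symm) i0 (hn i0)
        obtain ⟨j, hj, -⟩ := key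
        exact hi0 (hj ▸ hd j)
  rw [hmain]
  have hCmeas : MeasurableSet ((AddSubgroup.closure C : AddSubgroup ℝ) : Set ℝ) := by
    rw [auxClosure_eq C]
    exact MeasurableSet.iUnion fun k =>
      (auxGood_measurable C hC k).image_of_continuousOn_injOn
        (auxFsum_continuous k).continuousOn (auxInjOn hind k)
  apply auxAnalytic_union hCmeas.compl.analyticSet
  apply AnalyticSet.iUnion
  intro k
  apply AnalyticSet.image_of_continuous _ (auxFsum_continuous k)
  apply auxAnalytic_inter (auxGood_measurable C hC k).analyticSet
  have : B k = ⋃ i, (fun p : (Fin k → ℝ) × (Fin k → ℤ) => p.1 i) ⁻¹' Pᶜ := by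
    ext p; simp [hB]
  rw [this]
  exact AnalyticSet.iUnion fun i =>
    hP.preimage (((continuous_apply i).comp continuous_fst))
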